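/- Let χ ∈ L^∞(𝕋) with χ ≥ 0, and define P(τ) = |D| − iτχ − τ² with domain H¹(𝕋). If τ = λ + iγ with λ ∈ ℝ, λ ≠ 0, and either γ > 0 or γ < −(1/2)‖χ‖_{L^∞}, then P(τ)u = 0 with u ∈ H¹(𝕋) implies u = 0. -/

import Mathlib

open scoped Real
open MeasureTheory Filter Set

/-- The `L²(𝕋)` norm of a (2π-periodic) function, computed over one period. -/
noncomputable def l2norm (f : ℝ → ℂ) : ℝ :=
  Real.sqrt (∫ x in (0:ℝ)..(2 * π), ‖f x‖ ^ 2)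

/-- The `n`-th Fourier coefficient of a `2π`-periodic function. -/
noncomputable def fc (u : ℝ → ℂ) (n : ℤ) : ℂ :=
  (1 / (2 * π)) * ∫ x in (0:ℝ)..(2 * π), Complex.exp (-Complex.I * (n : ℂ) * (x : ℂ)) * u x

/-- The fractional Laplacian `|D|`, the Fourier multiplier with symbol `|n|`. -/
noncomputable def absD (u : ℝ → ℂ) : ℝ → ℂ :=
  fun x => ∑' n : ℤ, ((|n| : ℤ) : ℂ) * fc u n * Complex.exp (Complex.I * (n : ℂ) * (x : ℂ))

/-- The semiclassical Fourier multiplier `g(hD)`. -/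
noncomputable def fourierMult (g : ℝ → ℝ) (h : ℝ) (u : ℝ → ℂ) : ℝ → ℂ :=
  fun x => ∑' n : ℤ, (g (h * n) : ℂ) * fc u n * Complex.exp (Complex.I * (n : ℂ) * (x : ℂ))

/-- The semiclassically rescaled stationary damped operator
`𝒫(h,z)u = h|D|u - i√h z χ u - z² u`. -/
noncomputable def Pcal (χ : ℝ → ℝ) (h : ℝ) (z : ℂ) (u : ℝ → ℂ) : ℝ → ℂ :=
  fun x => (h : ℂ) * absD u x - Complex.I * (Real.sqrt h : ℂ) * z * (χ x : ℂ) * u x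
    - z ^ 2 * u x

private lemma stmt14_hard
    (χ : ℝ → ℝ) (M : ℝ) (hM : ∀ x, |χ x| ≤ M) (hpos : ∀ x, 0 ≤ χ x)
    (τ : ℂ) (hre : τ.re ≠ 0) (him : τ.im > 0 ∨ τ.im < -(1/2) * M)
    (u : ℝ → ℂ) (hu : Continuous u)
    (heq : ∀ x : ℝ, absD u x - Complex.I * τ * (χ x : ℂ) * u x - τ ^ 2 * u x = 0)
    (hsum : Summable (fun n : ℤ => |(n : ℝ)| * ‖fc u n‖)) :
    ∀ x ∈ Set.Ioo (0:ℝ) (2*π), u x = 0 := by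
  have h2 : (0:ℝ) < 2*π := by positivity
  set c : ℤ → ℂ := fc u with hc
  set a : ℤ → ℝ → ℂ :=
    fun n x => ((|n| : ℤ) : ℂ) * c n * Complex.exp (Complex.I * (n : ℂ) * (x : ℂ)) with ha
  have hnorm : ∀ (n : ℤ) (x : ℝ), ‖a n x‖ = |(n : ℝ)| * ‖c n‖ := by
    intro n x
    rw [ha, norm_mul, norm_mul, Complex.norm_exp]
    have : (Complex.I * (n : ℂ) * (x : ℂ)).re = 0 := by simp
    rw [this, Real.exp_zero, mul_one]
    congr 1
    simp
  have habsD : ∀ x, absD u x = ∑' n : ℤ, a n x := fun x => rfl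
  have hτ : τ ≠ 0 := fun h0 => hre (by simp [h0])
  have hacont : ∀ n : ℤ, Continuous (a n) := by
    intro n
    apply Continuous.mul continuous_const
    exact Complex.continuous_exp.comp (by continuity)
  have hsa : ∀ x : ℝ, Summable (fun n => a n x) := by
    intro x
    apply Summable.of_norm
    exact (summable_congr (fun n => hnorm n x)).2 hsum
  -- bound on u
  obtain ⟨C, hC⟩ := (isCompact_Icc (a := (0:ℝ)) (b := 2*π)).exists_bound_of_continuousOn
    hu.continuousOn
  have hC0 : (0:ℝ) ≤ C := le_trans (norm_nonneg _) (hC 0 ⟨le_refl _, h2.le⟩)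
  -- Fourier coefficient identities
  have hint : ∀ n : ℤ,
      (∫ x in (0:ℝ)..(2*π), Complex.exp (-Complex.I * (n:ℂ) * (x:ℂ)) * u x) = 2*π * c n := by
    intro n
    have hdef : c n = (1 / (2 * (π:ℂ))) *
        ∫ x in (0:ℝ)..(2*π), Complex.exp (-Complex.I * (n:ℂ) * (x:ℂ)) * u x := by
      rw [hc]; rfl
    have hπ : ((π : ℂ)) ≠ 0 := Complex.ofReal_ne_zero.2 Real.pi_ne_zero
    rw [hdef]
    field_simp
  have hconj : ∀ n : ℤ,
      (∫ x in (0:ℝ)..(2*π), Complex.exp (Complex.I * (n:ℂ) * (x:ℂ)) * (starRingEnd ℂ) (u x))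
        = 2*π * (starRingEnd ℂ) (c n) := by
    intro n
    have key : ∀ x : ℝ, Complex.exp (Complex.I * (n:ℂ) * (x:ℂ)) * (starRingEnd ℂ) (u x)
        = (starRingEnd ℂ) (Complex.exp (-Complex.I * (n:ℂ) * (x:ℂ)) * u x) := by
      intro x
      rw [map_mul, ← Complex.exp_conj]
      congr 2
      simp [map_mul, Complex.conj_I, Complex.conj_ofReal]
    rw [intervalIntegral.integral_congr (fun x _ => key x)]
    rw [intervalIntegral.integral_of_le h2.le, integral_conj,
      ← intervalIntegral.integral_of_le h2.le, hint n, map_mul,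
      show ((2:ℂ)*(π:ℂ)) = ((2*π:ℝ):ℂ) by push_cast; ring, Complex.conj_ofReal]
  -- strong measurability of absD u
  have hmeasD : StronglyMeasurable (absD u) := by
    apply stronglyMeasurable_of_tendsto (f := fun s : Finset ℤ => fun x => ∑ n ∈ s, a n x) atTop
      (fun s => (continuous_finset_sum s fun n _ => hacont n).stronglyMeasurable)
    rw [tendsto_pi_nhds]
    intro x
    rw [habsD x]
    exact (hsa x).hasSum
  set R := ∑' n : ℤ, |(n:ℝ)| * ‖c n‖ with hR
  have hDbound : ∀ x, ‖absD u x‖ ≤ R := by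
    intro x
    rw [habsD]
    calc ‖∑' n, a n x‖ ≤ (∑' n, ‖a n x‖) :=
          norm_tsum_le_tsum_norm ((summable_congr fun n => hnorm n x).2 hsum)
      _ = R := tsum_congr fun n => hnorm n x
  -- the integral of |D|u ⬝ conj u, computed by Fourier
  have hterm : ∀ n : ℤ, (∫ x in Ioc (0:ℝ) (2*π), a n x * (starRingEnd ℂ) (u x))
      = ((2*π * (|(n:ℝ)| * ‖c n‖^2) : ℝ) : ℂ) := by
    intro n
    rw [← intervalIntegral.integral_of_le h2.le]
    have hxx : ∀ x : ℝ, a n x * (starRingEnd ℂ) (u x)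
        = ((|n| : ℤ) : ℂ) * c n *
          (Complex.exp (Complex.I * (n:ℂ) * (x:ℂ)) * (starRingEnd ℂ) (u x)) := by
      intro x; rw [ha]; ring
    rw [intervalIntegral.integral_congr (fun x _ => hxx x),
      intervalIntegral.integral_const_mul, hconj n]
    have habs : ((|n| : ℤ) : ℂ) = ((|(n:ℝ)| : ℝ) : ℂ) := by norm_cast
    calc ((|n| : ℤ) : ℂ) * c n * (2*↑π * (starRingEnd ℂ) (c n))
        = ((|n| : ℤ) : ℂ) * (2*↑π) * (c n * (starRingEnd ℂ) (c n)) := by ring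
      _ = ((2*π * (|(n:ℝ)| * ‖c n‖^2) : ℝ) : ℂ) := by
          rw [Complex.mul_conj, habs, Complex.normSq_eq_norm_sq]
          push_cast
          ring
  have hbound : (∑' n : ℤ, ∫⁻ x in Ioc (0:ℝ) (2*π), ‖a n x * (starRingEnd ℂ) (u x)‖₊) ≠ ⊤ := by
    have hle : ∀ n : ℤ, (∫⁻ x in Ioc (0:ℝ) (2*π), ‖a n x * (starRingEnd ℂ) (u x)‖₊)
        ≤ ENNReal.ofReal (|(n:ℝ)| * ‖c n‖ * (C * (2*π))) := by
      intro n
      have hptb : ∀ x ∈ Ioc (0:ℝ) (2*π),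
          (‖a n x * (starRingEnd ℂ) (u x)‖₊ : ENNReal) ≤ ENNReal.ofReal (|(n:ℝ)| * ‖c n‖ * C) := by
        intro x hx
        rw [← enorm_eq_nnnorm, ← ofReal_norm]
        apply ENNReal.ofReal_le_ofReal
        rw [norm_mul, hnorm n x, RCLike.norm_conj]
        exact mul_le_mul_of_nonneg_left (hC x ⟨hx.1.le, hx.2⟩)
          (mul_nonneg (abs_nonneg _) (norm_nonneg _))
      calc (∫⁻ x in Ioc (0:ℝ) (2*π), ‖a n x * (starRingEnd ℂ) (u x)‖₊)
          ≤ ∫⁻ _ in Ioc (0:ℝ) (2*π), ENNReal.ofReal (|(n:ℝ)| * ‖c n‖ * C) :=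
            lintegral_mono_ae ((ae_restrict_iff' measurableSet_Ioc).2 (ae_of_all _ hptb))
        _ = ENNReal.ofReal (|(n:ℝ)| * ‖c n‖ * C) * volume (Ioc (0:ℝ) (2*π)) := by
            rw [lintegral_const, Measure.restrict_apply_univ]
        _ ≤ ENNReal.ofReal (|(n:ℝ)| * ‖c n‖ * (C * (2*π))) := by
            rw [Real.volume_Ioc, sub_zero, ← ENNReal.ofReal_mul
              (by positivity : (0:ℝ) ≤ |(n:ℝ)| * ‖c n‖ * C)]
            apply ENNReal.ofReal_le_ofReal
            ring_nf
            exact le_refl _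
    have hsum2 : Summable (fun n : ℤ => |(n:ℝ)| * ‖c n‖ * (C * (2*π))) := hsum.mul_right _
    have hfin1 : (∑' n : ℤ, ∫⁻ x in Ioc (0:ℝ) (2*π), ‖a n x * (starRingEnd ℂ) (u x)‖₊)
        ≤ ∑' n : ℤ, ENNReal.ofReal (|(n:ℝ)| * ‖c n‖ * (C * (2*π))) := by
      exact Summable.tsum_le_tsum hle ENNReal.summable ENNReal.summable
    have hfin2 : (∑' n : ℤ, ENNReal.ofReal (|(n:ℝ)| * ‖c n‖ * (C * (2*π)))) < ⊤ := by
      rw [← ENNReal.ofReal_tsum_of_nonneg (fun n => by positivity) hsum2]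
      exact ENNReal.ofReal_lt_top
    exact (lt_of_le_of_lt hfin1 hfin2).ne
  have hI1 : (∫ x in (0:ℝ)..(2*π), absD u x * (starRingEnd ℂ) (u x))
      = (((∑' n : ℤ, 2*π * (|(n:ℝ)| * ‖c n‖^2)) : ℝ) : ℂ) := by
    rw [intervalIntegral.integral_of_le h2.le]
    have hrw : ∀ x : ℝ, absD u x * (starRingEnd ℂ) (u x)
        = ∑' n : ℤ, a n x * (starRingEnd ℂ) (u x) := by
      intro x; rw [habsD, tsum_mul_right]
    calc (∫ x in Ioc (0:ℝ) (2*π), absD u x * (starRingEnd ℂ) (u x))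
        = (∫ x in Ioc (0:ℝ) (2*π), ∑' n : ℤ, a n x * (starRingEnd ℂ) (u x)) := by
          simp only [hrw]
      _ = (∑' n : ℤ, ∫ x in Ioc (0:ℝ) (2*π), a n x * (starRingEnd ℂ) (u x)) :=
          integral_tsum (fun n => ((hacont n).mul (Complex.continuous_conj.comp hu)).aestronglyMeasurable) hbound
      _ = (∑' n : ℤ, ((2*π * (|(n:ℝ)| * ‖c n‖^2) : ℝ) : ℂ)) := tsum_congr hterm
      _ = (((∑' n : ℤ, 2*π * (|(n:ℝ)| * ‖c n‖^2)) : ℝ) : ℂ) := (Complex.ofReal_tsum _).symm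
  -- pointwise identity from the equation
  have hmc : ∀ z : ℂ, z * (starRingEnd ℂ) z = ((‖z‖ : ℝ) : ℂ)^2 := by
    intro z
    rw [Complex.mul_conj, Complex.normSq_eq_norm_sq]
    push_cast
    ring
  have hpt : ∀ x : ℝ, absD u x * (starRingEnd ℂ) (u x)
      = Complex.I * τ * ((χ x * ‖u x‖^2 : ℝ) : ℂ) + τ^2 * ((‖u x‖^2 : ℝ) : ℂ) := by
    intro x
    have h' : absD u x = Complex.I * τ * (χ x : ℂ) * u x + τ^2 * u x := by
      linear_combination heq x
    rw [h']
    push_cast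
    linear_combination (Complex.I * τ * (χ x : ℂ) + τ^2) * hmc (u x)
  -- integrability
  have hwcont : Continuous (fun x : ℝ => ‖u x‖^2) := (hu.norm).pow 2
  have hWint : IntervalIntegrable (fun x : ℝ => ‖u x‖^2) volume 0 (2*π) :=
    hwcont.intervalIntegrable _ _
  have hWCint : IntervalIntegrable (fun x : ℝ => ((‖u x‖^2 : ℝ) : ℂ)) volume 0 (2*π) :=
    (Complex.continuous_ofReal.comp hwcont).intervalIntegrable _ _
  have hFint : IntervalIntegrable (fun x => absD u x * (starRingEnd ℂ) (u x)) volume 0 (2*π) := by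
    rw [intervalIntegrable_iff_integrableOn_Ioc_of_le h2.le]
    constructor
    · exact (hmeasD.mul (Complex.continuous_conj.comp hu).stronglyMeasurable).aestronglyMeasurable
    · apply HasFiniteIntegral.of_bounded (C := R * C)
      apply (ae_restrict_iff' measurableSet_Ioc).2 (ae_of_all _ _)
      intro x hx
      rw [norm_mul, RCLike.norm_conj]
      exact mul_le_mul (hDbound x) (hC x ⟨hx.1.le, hx.2⟩) (norm_nonneg _)
        (le_trans (norm_nonneg _) (hDbound 0))
  have hIτ : Complex.I * τ ≠ 0 := mul_ne_zero Complex.I_ne_zero hτ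
  have hGCint : IntervalIntegrable (fun x : ℝ => ((χ x * ‖u x‖^2 : ℝ) : ℂ)) volume 0 (2*π) := by
    have hid : (fun x : ℝ => ((χ x * ‖u x‖^2 : ℝ) : ℂ))
        = fun x => (absD u x * (starRingEnd ℂ) (u x) - τ^2 * ((‖u x‖^2 : ℝ) : ℂ))
            * (Complex.I * τ)⁻¹ := by
      funext x
      rw [hpt x]
      push_cast
      field_simp
      ring
    rw [hid]
    exact (hFint.sub (hWCint.const_mul _)).mul_const _
  have hGint : IntervalIntegrable (fun x : ℝ => χ x * ‖u x‖^2) volume 0 (2*π) := by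
    constructor
    · exact hGCint.1.re.congr (ae_of_all _ (fun x => by norm_cast))
    · exact hGCint.2.re.congr (ae_of_all _ (fun x => by norm_cast))
  set W : ℝ := ∫ x in (0:ℝ)..(2*π), ‖u x‖^2 with hW
  set G : ℝ := ∫ x in (0:ℝ)..(2*π), χ x * ‖u x‖^2 with hG
  have hI2 : (∫ x in (0:ℝ)..(2*π), absD u x * (starRingEnd ℂ) (u x))
      = Complex.I * τ * (G : ℂ) + τ^2 * (W : ℂ) := by
    rw [intervalIntegral.integral_congr (g := fun x =>
        Complex.I * τ * ((χ x * ‖u x‖^2 : ℝ) : ℂ) + τ^2 * ((‖u x‖^2 : ℝ) : ℂ))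
      (fun x _ => hpt x)]
    rw [intervalIntegral.integral_add (hGCint.const_mul _) (hWCint.const_mul _),
      intervalIntegral.integral_const_mul, intervalIntegral.integral_const_mul,
      intervalIntegral.integral_ofReal, intervalIntegral.integral_ofReal]
  -- imaginary part
  have hIim : (Complex.I * τ * (G : ℂ) + τ^2 * (W : ℂ)).im = 0 := by
    rw [← hI2, hI1]
    exact Complex.ofReal_im _
  have him0 : τ.re * G + (τ.re * τ.im + τ.im * τ.re) * W = 0 := by
    simpa [Complex.add_im, Complex.mul_im, Complex.mul_re, pow_two] using hIim
  have hkey : G + 2 * τ.im * W = 0 := by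
    have hz : τ.re * (G + 2 * τ.im * W) = 0 := by ring_nf; ring_nf at him0; linarith
    rcases mul_eq_zero.1 hz with h | h
    · exact absurd h hre
    · exact h
  -- sign analysis
  have hWnn : 0 ≤ W := intervalIntegral.integral_nonneg h2.le (fun x _ => by positivity)
  have hGnn : 0 ≤ G := intervalIntegral.integral_nonneg h2.le
    (fun x _ => mul_nonneg (hpos x) (by positivity))
  have hM0 : (0:ℝ) ≤ M := le_trans (abs_nonneg _) (hM 0)
  have hGle : G ≤ M * W := by
    have hMW : (∫ x in (0:ℝ)..(2*π), M * ‖u x‖^2) = M * W := by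
      rw [intervalIntegral.integral_const_mul]
    rw [← hMW]
    apply intervalIntegral.integral_mono_on h2.le hGint (hWint.const_mul M)
    intro x _
    exact mul_le_mul_of_nonneg_right (le_trans (le_abs_self _) (hM x)) (by positivity)
  have hW0 : W = 0 := by
    rcases him with h | h
    · nlinarith
    · nlinarith
  -- conclude
  have hae : (fun x : ℝ => ‖u x‖^2) =ᵐ[volume.restrict (Ioc 0 (2*π))] 0 :=
    (intervalIntegral.integral_eq_zero_iff_of_le_of_nonneg_ae h2.le
      (ae_of_all _ (fun x => by positivity)) hWint).1 hW0
  intro x hx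
  by_contra hne
  have hVopen : IsOpen (Ioo (0:ℝ) (2*π) ∩ {y | u y ≠ 0}) :=
    isOpen_Ioo.inter ((isClosed_eq hu continuous_const).isOpen_compl)
  have hVne : (Ioo (0:ℝ) (2*π) ∩ {y | u y ≠ 0}).Nonempty := ⟨x, hx, hne⟩
  have hVpos : 0 < volume (Ioo (0:ℝ) (2*π) ∩ {y | u y ≠ 0}) :=
    hVopen.measure_pos volume hVne
  have hnull : volume ({y : ℝ | ¬ ‖u y‖^2 = 0} ∩ Ioc 0 (2*π)) = 0 := by
    have h5 : (volume.restrict (Ioc (0:ℝ) (2*π))) {y : ℝ | ¬ ‖u y‖^2 = 0} = 0 := by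
      have h6 := hae
      rw [Filter.EventuallyEq, ae_iff] at h6
      simpa using h6
    rwa [show {y : ℝ | ¬ ‖u y‖^2 = 0} = {y : ℝ | ‖u y‖^2 = 0}ᶜ from rfl,
      Measure.restrict_apply
      ((isClosed_eq hwcont continuous_const).isOpen_compl.measurableSet)] at h5
  have hsub : (Ioo (0:ℝ) (2*π) ∩ {y | u y ≠ 0})
      ⊆ {y : ℝ | ¬ ‖u y‖^2 = 0} ∩ Ioc 0 (2*π) := by
    rintro y ⟨hy1, hy2⟩
    refine ⟨?_, hy1.1, hy1.2.le⟩
    simp only [Set.mem_setOf_eq, pow_eq_zero_iff, norm_eq_zero]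
    exact fun h => hy2 (by simpa using h)
  have hmono := measure_mono (μ := volume) hsub
  rw [hnull] at hmono
  exact hVpos.ne' (le_antisymm hmono zero_le)

/-- if `τ = λ + iγ` with `λ ≠ 0` and `γ > 0` or `γ < -‖χ‖_∞/2`, then the
equation `P(τ)u = (|D| - iτχ - τ²)u = 0` has only the trivial solution in `H¹(𝕋)`. -/
theorem stmt14
    (χ : ℝ → ℝ) (M : ℝ) (hM : ∀ x, |χ x| ≤ M) (hpos : ∀ x, 0 ≤ χ x)
    (hper : Function.Periodic χ (2 * π))
    (τ : ℂ) (hre : τ.re ≠ 0) (him : τ.im > 0 ∨ τ.im < -(1/2) * M)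
    (u : ℝ → ℂ) (hu : Continuous u) (hup : Function.Periodic u (2 * π))
    (hH1 : Summable (fun n : ℤ => (n : ℝ) ^ 2 * ‖fc u n‖ ^ 2))
    (heq : ∀ x : ℝ, absD u x - Complex.I * τ * (χ x : ℂ) * u x - τ ^ 2 * u x = 0) :
    ∀ x : ℝ, u x = 0 := by
  have h2 : (0:ℝ) < 2*π := by positivity
  set c : ℤ → ℂ := fc u with hc
  set a : ℤ → ℝ → ℂ :=
    fun n x => ((|n| : ℤ) : ℂ) * c n * Complex.exp (Complex.I * (n : ℂ) * (x : ℂ)) with ha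
  have hnorm : ∀ (n : ℤ) (x : ℝ), ‖a n x‖ = |(n : ℝ)| * ‖c n‖ := by
    intro n x
    rw [ha]
    rw [norm_mul, norm_mul, Complex.norm_exp]
    have : (Complex.I * (n : ℂ) * (x : ℂ)).re = 0 := by simp
    rw [this, Real.exp_zero, mul_one]
    congr 1
    simp
  have habsD : ∀ x, absD u x = ∑' n : ℤ, a n x := fun x => rfl
  have hfac : ∀ s : ℝ, 0 ≤ s → Complex.I * τ * (s : ℂ) + τ ^ 2 ≠ 0 := by
    intro s _ h
    have hτ : τ ≠ 0 := fun h0 => hre (by simp [h0])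
    have h2' : τ * (Complex.I * (s : ℂ) + τ) = 0 := by linear_combination h
    rcases mul_eq_zero.1 h2' with h3 | h3
    · exact hτ h3
    · exact hre (by simpa using congrArg Complex.re h3)
  by_cases hsum : Summable (fun n : ℤ => |(n : ℝ)| * ‖c n‖)
  · -- hard case
    -- u = 0 on Ioo, then conclude
    have hIoo : ∀ x ∈ Set.Ioo (0:ℝ) (2*π), u x = 0 :=
      stmt14_hard χ M hM hpos τ hre him u hu heq hsum
    have hclosed : IsClosed {x : ℝ | u x = 0} := isClosed_eq hu continuous_const
    have hIcc : ∀ x ∈ Set.Icc (0:ℝ) (2*π), u x = 0 := by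
      intro x hx
      have hsub : Set.Icc (0:ℝ) (2*π) ⊆ {x | u x = 0} := by
        rw [← closure_Ioo (ne_of_lt h2)]
        exact hclosed.closure_subset_iff.2 hIoo
      exact hsub hx
    intro x
    have h0 : (0:ℝ) ≤ x - ⌊x / (2*π)⌋ * (2*π) := Int.sub_floor_div_mul_nonneg x h2
    have h1 : x - ⌊x / (2*π)⌋ * (2*π) < 2*π := Int.sub_floor_div_mul_lt x h2
    rw [← hup.sub_int_mul_eq (x := x) ⌊x / (2*π)⌋]
    exact hIcc _ ⟨h0, h1.le⟩
  · -- easy case: tsum is zero everywhere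
    intro x
    have h1 : ¬ Summable (fun n => a n x) := by
      intro h
      exact hsum ((summable_congr (fun n => (hnorm n x).symm)).2 h.norm)
    have h0 : absD u x = 0 := by rw [habsD x]; exact tsum_eq_zero_of_not_summable h1
    have h3 := heq x
    rw [h0] at h3
    have h4 : (Complex.I * τ * (χ x : ℂ) + τ ^ 2) * u x = 0 := by linear_combination -h3
    rcases mul_eq_zero.1 h4 with h5 | h5
    · exact absurd h5 (hfac _ (hpos x))
    · exact h5
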